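/- Let n ≥ 4 be even, and let V_0 ⊂ Θ_n be the span of the basis symbols [a,b,c]^0 with a+b+c = n, and V_1 ⊂ Θ_n the span of the basis symbols [a,b,c]^1 with a+b+c = n−1. Then the restriction of d to V_1 is an injective linear map V_1 → V_0, and the quotient space V_0 / d(V_1) has dimension ⌊n/6⌋ over ℚ. -/

import Mathlib

/-- Validity condition for a theta-graph basis symbol `[a,b,c]^l`:
`0 ≤ a < b < c`, `l ∈ {0,1,2}`, with the parity conventions that `l = 0`
requires `a + b + c` even and `l = 2` requires `a + b + c` odd. -/
def validSym (a b c l : ℤ) : Prop :=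
  0 ≤ a ∧ a < b ∧ b < c ∧ (l = 0 ∨ l = 1 ∨ l = 2) ∧
    (l = 0 → Even (a + b + c)) ∧ (l = 2 → Odd (a + b + c))

/-- The indexing set of valid theta symbols. -/
def SymIdx : Type := {p : ℤ × ℤ × ℤ × ℤ // validSym p.1 p.2.1 p.2.2.1 p.2.2.2}

/-- The theta space `Θ`: the free `ℚ`-vector space on the valid symbols. -/
abbrev Theta : Type := SymIdx →₀ ℚ

/-- The symbol `[a,b,c]^l ∈ Θ`, extended by `0` when the validity
conditions fail. -/
noncomputable def sym (a b c l : ℤ) : Theta := by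
  classical
  exact if h : validSym a b c l then Finsupp.single ⟨(a, b, c, l), h⟩ 1 else 0

/-- Value of the differential on a basis symbol. -/
noncomputable def dAux (p : SymIdx) : Theta := by
  classical
  exact
    if p.1.2.2.2 = 1 then
      sym (p.1.1 + 1) p.1.2.1 p.1.2.2.1 0 - sym p.1.1 (p.1.2.1 + 1) p.1.2.2.1 0
        + sym p.1.1 p.1.2.1 (p.1.2.2.1 + 1) 0
    else if p.1.2.2.2 = 2 then
      (2 : ℚ) • (sym (p.1.1 + 1) p.1.2.1 p.1.2.2.1 1 - sym p.1.1 (p.1.2.1 + 1) p.1.2.2.1 1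
        + sym p.1.1 p.1.2.1 (p.1.2.2.1 + 1) 1)
    else 0

/-- The `ℚ`-linear differential `d : Θ → Θ`, given on basis symbols by
`d [a,b,c]^0 = 0`, `d [a,b,c]^1 = [a+1,b,c]^0 - [a,b+1,c]^0 + [a,b,c+1]^0`,
`d [a,b,c]^2 = 2([a+1,b,c]^1 - [a,b+1,c]^1 + [a,b,c+1]^1)`. -/
noncomputable def dTheta : Theta →ₗ[ℚ] Theta :=
  Finsupp.lsum ℚ fun p => LinearMap.toSpanSingleton ℚ Theta (dAux p)

/-- The weight-`n` part `Θ_n`: the span of the symbols `[a,b,c]^l` with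
`a + b + c + l = n`. -/
noncomputable def ThetaN (n : ℤ) : Submodule ℚ Theta :=
  Submodule.span ℚ {x | ∃ a b c l : ℤ, a + b + c + l = n ∧ x = sym a b c l}


/-- `V_0 ⊂ Θ_n`: the span of the symbols `[a,b,c]^0` with `a + b + c = n`. -/
noncomputable def V0 (n : ℤ) : Submodule ℚ Theta :=
  Submodule.span ℚ {x | ∃ a b c : ℤ, a + b + c = n ∧ x = sym a b c 0}

/-- `V_1 ⊂ Θ_n`: the span of the symbols `[a,b,c]^1` with `a + b + c = n - 1`. -/
noncomputable def V1 (n : ℤ) : Submodule ℚ Theta :=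
  Submodule.span ℚ {x | ∃ a b c : ℤ, a + b + c = n - 1 ∧ x = sym a b c 1}

lemma sym_of_valid {a b c l : ℤ} (h : validSym a b c l) :
    sym a b c l = Finsupp.single ⟨(a,b,c,l), h⟩ 1 := by
  unfold sym; exact dif_pos h

lemma sym_of_not_valid {a b c l : ℤ} (h : ¬ validSym a b c l) :
    sym a b c l = 0 := by
  unfold sym; exact dif_neg h

lemma sym_apply (a b c l : ℤ) (q : SymIdx) :
    sym a b c l q = if q.1 = (a,b,c,l) then 1 else 0 := by
  classical
  by_cases h : validSym a b c l
  · erw [sym_of_valid h, Finsupp.single_apply]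
    congr 1
    erw [Subtype.ext_iff]
    exact propext eq_comm
  · rw [sym_of_not_valid h]
    rw [if_neg, Finsupp.coe_zero, Pi.zero_apply]
    intro hq
    apply h
    have h2 := q.2
    rw [hq] at h2
    exact h2

lemma dTheta_apply (x : Theta) :
    dTheta x = ∑ p ∈ x.support, x p • dAux p := by
  rw [dTheta, Finsupp.lsum_apply]
  rfl

def S0 (n : ℤ) : Set SymIdx := {p | p.1.2.2.2 = 0 ∧ p.1.1 + p.1.2.1 + p.1.2.2.1 = n}
def S1 (n : ℤ) : Set SymIdx := {p | p.1.2.2.2 = 1 ∧ p.1.1 + p.1.2.1 + p.1.2.2.1 = n - 1}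

lemma V0_eq (n : ℤ) : V0 n = Finsupp.supported ℚ ℚ (S0 n) := by
  rw [Finsupp.supported_eq_span_single, V0]
  apply le_antisymm
  · rw [Submodule.span_le]
    rintro x ⟨a,b,c,hs,rfl⟩
    by_cases h : validSym a b c 0
    · exact Submodule.subset_span ⟨⟨(a,b,c,0),h⟩, ⟨rfl, hs⟩, (sym_of_valid h).symm⟩
    · rw [sym_of_not_valid h]; exact Submodule.zero_mem _
  · rw [Submodule.span_le]
    rintro x ⟨p, hp, rfl⟩
    apply Submodule.subset_span
    obtain ⟨⟨a,b,c,l⟩, hv⟩ := p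
    obtain ⟨hl, hs⟩ := hp
    simp only at hl hs
    subst hl
    exact ⟨a, b, c, hs, (sym_of_valid hv).symm⟩

lemma V1_eq (n : ℤ) : V1 n = Finsupp.supported ℚ ℚ (S1 n) := by
  rw [Finsupp.supported_eq_span_single, V1]
  apply le_antisymm
  · rw [Submodule.span_le]
    rintro x ⟨a,b,c,hs,rfl⟩
    by_cases h : validSym a b c 1
    · exact Submodule.subset_span ⟨⟨(a,b,c,1),h⟩, ⟨rfl, hs⟩, (sym_of_valid h).symm⟩
    · rw [sym_of_not_valid h]; exact Submodule.zero_mem _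
  · rw [Submodule.span_le]
    rintro x ⟨p, hp, rfl⟩
    apply Submodule.subset_span
    obtain ⟨⟨a,b,c,l⟩, hv⟩ := p
    obtain ⟨hl, hs⟩ := hp
    simp only at hl hs
    subst hl
    exact ⟨a, b, c, hs, (sym_of_valid hv).symm⟩

example : True := trivial

lemma key_inj (n : ℤ) (hne : Even n) (x : Theta) (hx : x ∈ V1 n) (hdx : dTheta x = 0) :
    x = 0 := by
  classical
  rw [V1_eq, Finsupp.mem_supported] at hx
  by_contra hx0
  obtain ⟨p₀, hp₀s, hmax⟩ := Finset.exists_max_image x.support (fun p => p.1.2.2.1)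
    (Finsupp.support_nonempty_iff.2 hx0)
  obtain ⟨⟨a,b,c,l⟩, hv⟩ := p₀
  obtain ⟨hl, hsum⟩ := hx hp₀s
  simp only at hl hsum hmax
  subst hl
  have ha : (0:ℤ) ≤ a := hv.1
  have hab : a < b := hv.2.1
  have hbc : b < c := hv.2.2.1
  have hq : validSym a b (c+1) 0 := by
    refine ⟨ha, hab, by omega, Or.inl rfl, fun _ => ?_, by omega⟩
    obtain ⟨m, hm⟩ := hne
    exact ⟨m, by omega⟩
  have hzero : (dTheta x) ⟨(a,b,c+1,0), hq⟩ = 0 := by rw [hdx]; rfl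
  erw [dTheta_apply, Finsupp.finset_sum_apply] at hzero
  have hterm : ∀ p ∈ x.support,
      (x p • dAux p) ⟨(a,b,c+1,0), hq⟩ = if p = ⟨(a,b,c,1), hv⟩ then x p else 0 := by
    intro p hp
    obtain ⟨hl', hsum'⟩ := hx hp
    have hc' : p.1.2.2.1 ≤ c := hmax p hp
    obtain ⟨⟨a',b',c',l'⟩, hv'⟩ := p
    simp only at hl' hsum'
    subst hl'
    have hc2 : c' ≤ c := hc'
    clear hc'
    erw [Finsupp.smul_apply]
    have hd : dAux ⟨(a',b',c',1), hv'⟩ =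
        sym (a'+1) b' c' 0 - sym a' (b'+1) c' 0 + sym a' b' (c'+1) 0 := by
      unfold dAux; rw [if_pos rfl]
    erw [hd, Finsupp.add_apply, Finsupp.sub_apply, sym_apply, sym_apply, sym_apply]
    by_cases he : (⟨(a',b',c',1), hv'⟩ : SymIdx) = ⟨(a,b,c,1), hv⟩
    · erw [if_pos he]
      have habc : a' = a ∧ b' = b ∧ c' = c := by
        have := congrArg Subtype.val he
        simp only [Prod.mk.injEq] at this
        tauto
      obtain ⟨rfl, rfl, rfl⟩ := habc
      erw [if_neg (by simp only [Prod.mk.injEq, and_true, true_and]; omega),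
        if_neg (by simp only [Prod.mk.injEq, and_true, true_and]; omega),
        if_pos rfl]
      rw [smul_eq_mul]; ring
    · erw [if_neg he]
      have hne' : ¬((a,b,c+1,0) : ℤ×ℤ×ℤ×ℤ) = (a'+1,b',c',0) := by
        simp only [Prod.mk.injEq, and_true, true_and]; omega
      have hne2 : ¬((a,b,c+1,0) : ℤ×ℤ×ℤ×ℤ) = (a',b'+1,c',0) := by
        simp only [Prod.mk.injEq, and_true, true_and]; omega
      have hne3 : ¬((a,b,c+1,0) : ℤ×ℤ×ℤ×ℤ) = (a',b',c'+1,0) := by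
        intro h4
        apply he
        apply Subtype.ext
        simp only [Prod.mk.injEq, and_true] at h4 ⊢
        omega
      erw [if_neg hne', if_neg hne2, if_neg hne3]
      simp
  erw [Finset.sum_congr rfl hterm, Finset.sum_ite_eq' x.support _ (fun p => x p),
    if_pos hp₀s] at hzero
  exact (Finsupp.mem_support_iff.1 hp₀s) hzero

lemma valid1 {a b c : ℤ} (ha : 0 ≤ a) (hab : a < b) (hbc : b < c) : validSym a b c 1 :=
  ⟨ha, hab, hbc, Or.inr (Or.inl rfl), fun h => by norm_num at h, fun h => by norm_num at h⟩

lemma valid0 {a b c : ℤ} (ha : 0 ≤ a) (hab : a < b) (hbc : b < c) (hev : Even (a + b + c)) :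
    validSym a b c 0 :=
  ⟨ha, hab, hbc, Or.inl rfl, fun _ => hev, fun h => by norm_num at h⟩

def pDef : SymIdx := ⟨(0,1,2,1), valid1 le_rfl (by norm_num) (by norm_num)⟩

lemma S_fin (s t : ℤ) :
    {p : SymIdx | p.1.2.2.2 = t ∧ p.1.1 + p.1.2.1 + p.1.2.2.1 = s}.Finite := by
  classical
  apply Set.Finite.subset (Set.Finite.preimage (Subtype.val_injective.injOn)
    ((Finset.Icc (0:ℤ) s ×ˢ Finset.Icc (0:ℤ) s ×ˢ Finset.Icc (0:ℤ) s ×ˢ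
      ({t} : Finset ℤ)).finite_toSet))
  rintro ⟨⟨a,b,c,l⟩, hv⟩ ⟨hl, hs⟩
  simp only at hl hs
  subst hl
  have ha : (0:ℤ) ≤ a := hv.1
  have hab : a < b := hv.2.1
  have hbc : b < c := hv.2.2.1
  simp only [Set.mem_preimage, Finset.coe_product, Set.mem_prod, Finset.mem_coe,
    Finset.mem_Icc, Finset.mem_singleton, and_true]
  omega

lemma fd_supported (s : Set SymIdx) (hs : s.Finite) :
    FiniteDimensional ℚ ↥(Finsupp.supported ℚ ℚ s) := by
  haveI := hs.fintype
  exact Module.Finite.equiv (Finsupp.supportedEquivFinsupp (M := ℚ) (R := ℚ) s).symm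

lemma finrank_supported (s : Set SymIdx) (hs : s.Finite) :
    Module.finrank ℚ ↥(Finsupp.supported ℚ ℚ s) = s.ncard := by
  haveI := hs.fintype
  rw [(Finsupp.supportedEquivFinsupp (M := ℚ) (R := ℚ) s).finrank_eq,
    Module.finrank_finsupp_self, Set.ncard_eq_toFinset_card', Set.toFinset_card]

lemma ncard_count (n : ℤ) (hn : 4 ≤ n) (hne : Even n) :
    (S0 n).ncard = (S1 n).ncard + (n / 6).toNat := by
  classical
  obtain ⟨m, hm⟩ := hne
  have hS0fin : (S0 n).Finite := S_fin n 0
  have hS1fin : (S1 n).Finite := S_fin (n-1) 1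
  set C : Set SymIdx := {p | p ∈ S0 n ∧ p.1.2.2.1 = p.1.2.1 + 1} with hC
  set D : Set SymIdx := {p | p ∈ S0 n ∧ p.1.2.2.1 ≠ p.1.2.1 + 1} with hD
  have hunion : S0 n = C ∪ D := by
    ext p
    constructor
    · intro hp
      by_cases h : p.1.2.2.1 = p.1.2.1 + 1
      · exact Or.inl ⟨hp, h⟩
      · exact Or.inr ⟨hp, h⟩
    · rintro (⟨hp,-⟩|⟨hp,-⟩) <;> exact hp
  have hdisj : Disjoint C D := by
    rw [Set.disjoint_left]
    rintro p ⟨-, h1⟩ ⟨-, h2⟩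
    exact h2 h1
  have hCfin : C.Finite := hS0fin.subset (fun p hp => hp.1)
  have hDfin : D.Finite := hS0fin.subset (fun p hp => hp.1)
  set f : SymIdx → SymIdx := fun p =>
    if h : validSym p.1.1 p.1.2.1 (p.1.2.2.1 + 1) 0 then
      ⟨(p.1.1, p.1.2.1, p.1.2.2.1 + 1, 0), h⟩ else p with hf
  have hfval : ∀ p ∈ S1 n, validSym p.1.1 p.1.2.1 (p.1.2.2.1 + 1) 0 := by
    rintro ⟨⟨a,b,c,l⟩, hv⟩ ⟨hl, hs⟩
    simp only at hl hs
    subst hl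
    exact valid0 hv.1 hv.2.1 (by have := hv.2.2.1; simp only at this ⊢; omega)
      ⟨m, by simp only at hs ⊢; omega⟩
  have hfD : D = f '' (S1 n) := by
    ext p
    constructor
    · rintro ⟨⟨hl, hs⟩, hcb⟩
      obtain ⟨⟨a,b,c,l⟩, hv⟩ := p
      simp only at hl hs hcb
      subst hl
      have ha : (0:ℤ) ≤ a := hv.1
      have hab : a < b := hv.2.1
      have hbc : b < c := hv.2.2.1
      have hq : validSym a b (c-1) 1 := valid1 ha hab (by omega)
      refine ⟨⟨(a,b,c-1,1), hq⟩, ⟨rfl, by simp only; omega⟩, ?_⟩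
      have hval : validSym a b (c-1+1) 0 := by
        have hcc : c - 1 + 1 = c := by ring
        rw [hcc]; exact hv
      rw [hf]
      simp only
      erw [dif_pos hval]
      exact Subtype.ext (by simp only [Prod.mk.injEq, and_true, true_and]; omega)
    · rintro ⟨q, hq, rfl⟩
      have hval := hfval q hq
      obtain ⟨hl, hs⟩ := hq
      obtain ⟨⟨a,b,c,l⟩, hv⟩ := q
      simp only at hl hs hval
      subst hl
      have hbc : b < c := hv.2.2.1
      rw [hf]
      simp only
      erw [dif_pos hval]
      exact ⟨⟨rfl, by simp only; omega⟩, by simp only; omega⟩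
  have hinj : Set.InjOn f (S1 n) := by
    intro p hp p' hp' heq
    have hval := hfval p hp
    have hval' := hfval p' hp'
    rw [hf] at heq
    simp only at heq
    erw [dif_pos hval, dif_pos hval'] at heq
    have h2 := congrArg Subtype.val heq
    simp only [Prod.mk.injEq, and_true] at h2
    obtain ⟨hl, -⟩ := hp
    obtain ⟨hl', -⟩ := hp'
    apply Subtype.ext
    obtain ⟨⟨a,b,c,l⟩, hv⟩ := p
    obtain ⟨⟨a',b',c',l'⟩, hv'⟩ := p'
    simp only at hl hl' h2 ⊢
    simp only [Prod.mk.injEq] at h2 ⊢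
    refine ⟨h2.1, h2.2.1, by omega, by omega⟩
  have hD_card : D.ncard = (S1 n).ncard := by
    rw [hfD, Set.ncard_image_of_injOn hinj]
  set g : ℤ → SymIdx := fun b =>
    if h : validSym (n-1-2*b) b (b+1) 0 then ⟨(n-1-2*b, b, b+1, 0), h⟩ else pDef with hg
  have hgval : ∀ b : ℤ, b ∈ Set.Ioc ((n-1)/3) ((n-1)/2) → validSym (n-1-2*b) b (b+1) 0 := by
    intro b hb
    rw [Set.mem_Ioc] at hb
    exact valid0 (by omega) (by omega) (by omega) ⟨m, by omega⟩
  have hgC : C = g '' (Set.Ioc ((n-1)/3) ((n-1)/2)) := by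
    ext p
    constructor
    · rintro ⟨⟨hl, hs⟩, hcb⟩
      obtain ⟨⟨a,b,c,l⟩, hv⟩ := p
      simp only at hl hs hcb
      subst hl
      have ha : (0:ℤ) ≤ a := hv.1
      have hab : a < b := hv.2.1
      refine ⟨b, ?_, ?_⟩
      · rw [Set.mem_Ioc]; omega
      · have hval : validSym (n-1-2*b) b (b+1) 0 := valid0 (by omega) (by omega)
          (by omega) ⟨m, by omega⟩
        rw [hg]
        simp only
        erw [dif_pos hval]
        exact Subtype.ext (by simp only [Prod.mk.injEq, and_true, true_and]; omega)
    · rintro ⟨b, hb, rfl⟩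
      have hval := hgval b hb
      rw [hg]
      simp only
      erw [dif_pos hval]
      exact ⟨⟨rfl, by simp only; omega⟩, by simp only⟩
  have hginj : Set.InjOn g (Set.Ioc ((n-1)/3) ((n-1)/2)) := by
    intro b hb b' hb' heq
    have hval := hgval b hb
    have hval' := hgval b' hb'
    rw [hg] at heq
    simp only at heq
    erw [dif_pos hval, dif_pos hval'] at heq
    have h2 := congrArg Subtype.val heq
    simp only [Prod.mk.injEq, and_true] at h2
    exact h2.2.1
  have hC_card : C.ncard = ((n-1)/2 - (n-1)/3).toNat := by
    rw [hgC, Set.ncard_image_of_injOn hginj, ← Finset.coe_Ioc, Set.ncard_coe_finset,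
      Int.card_Ioc]
  have hu := Set.ncard_union_eq hdisj hCfin hDfin
  rw [hunion, hu, hC_card, hD_card]
  omega


set_option synthInstance.maxHeartbeats 1000000 in
set_option maxHeartbeats 1000000 in
/-- For even `n ≥ 4`, the restriction of `d` to `V_1` is an injective linear
map `V_1 → V_0`, and the quotient `V_0 / d(V_1)` has dimension `⌊n/6⌋`. -/
theorem theta_cohomology_dim (n : ℤ) (hn : 4 ≤ n) (hne : Even n) :
    Submodule.map dTheta (V1 n) ≤ V0 n ∧
    Set.InjOn (fun x => dTheta x) (V1 n : Set Theta) ∧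
    Module.finrank ℚ
        (↥(V0 n) ⧸ (Submodule.map dTheta (V1 n)).comap (V0 n).subtype)
      = (n / 6).toNat := by
  classical
  have hmap : Submodule.map dTheta (V1 n) ≤ V0 n := by
    rw [Submodule.map_le_iff_le_comap, V1, Submodule.span_le]
    rintro x ⟨a,b,c,hs,rfl⟩
    simp only [SetLike.mem_coe, Submodule.mem_comap]
    by_cases h : validSym a b c 1
    · rw [sym_of_valid h]
      have hsingle : dTheta (Finsupp.single ⟨(a,b,c,1),h⟩ (1:ℚ)) = dAux ⟨(a,b,c,1),h⟩ := by
        erw [dTheta, Finsupp.lsum_single, LinearMap.toSpanSingleton_apply, one_smul]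
      rw [hsingle]
      have hd : dAux ⟨(a,b,c,1),h⟩ = sym (a+1) b c 0 - sym a (b+1) c 0 + sym a b (c+1) 0 := by
        unfold dAux; rw [if_pos rfl]
      rw [hd]
      refine Submodule.add_mem _ (Submodule.sub_mem _ ?_ ?_) ?_ <;>
        apply Submodule.subset_span
      · exact ⟨a+1, b, c, by omega, rfl⟩
      · exact ⟨a, b+1, c, by omega, rfl⟩
      · exact ⟨a, b, c+1, by omega, rfl⟩
    · rw [sym_of_not_valid h, map_zero]
      exact Submodule.zero_mem _
  refine ⟨hmap, ?_, ?_⟩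
  · intro x hx y hy hxy
    simp only at hxy
    have hsub : x - y ∈ V1 n := Submodule.sub_mem _ hx hy
    have hz : dTheta (x - y) = 0 := by rw [map_sub, hxy, sub_self]
    have := key_inj n hne (x - y) hsub hz
    exact sub_eq_zero.1 this
  · haveI : FiniteDimensional ℚ ↥(V0 n) := by
      rw [V0_eq]; exact fd_supported _ (S_fin n 0)
    haveI : FiniteDimensional ℚ ↥(V1 n) := by
      rw [V1_eq]; exact fd_supported _ (S_fin (n-1) 1)
    have h1 : Module.finrank ℚ ↥(V0 n) = (S0 n).ncard := by
      rw [V0_eq]; exact finrank_supported _ (S_fin n 0)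
    have h2 : Module.finrank ℚ ↥(V1 n) = (S1 n).ncard := by
      rw [V1_eq]; exact finrank_supported _ (S_fin (n-1) 1)
    set W := Submodule.map dTheta (V1 n) with hW
    set f : ↥(V1 n) →ₗ[ℚ] Theta := dTheta ∘ₗ (V1 n).subtype with hfdef
    have hker : LinearMap.ker f = ⊥ := by
      rw [LinearMap.ker_eq_bot']
      intro v hv
      exact Subtype.ext (key_inj n hne v.1 v.2 hv)
    have hrange : LinearMap.range f = W := by
      rw [hfdef, LinearMap.range_comp, Submodule.range_subtype]
    have h3 : Module.finrank ℚ ↥W = Module.finrank ℚ ↥(V1 n) := by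
      rw [← hrange]
      exact ((LinearEquiv.ofInjective f (LinearMap.ker_eq_bot.1 hker)).finrank_eq).symm
    have h4 : Module.finrank ℚ ↥(W.comap (V0 n).subtype) = Module.finrank ℚ ↥W :=
      (Submodule.comapSubtypeEquivOfLe hmap).finrank_eq
    have h5 := Submodule.finrank_quotient_add_finrank (W.comap (V0 n).subtype)
    have hcount := ncard_count n hn hne
    omega
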